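/- Let (E,‖·‖_E) be a normed real vector space, let T, c ∈ (0,∞), α ∈ [0,1], let θ = {θ_0, θ_1, …, θ_K} be a partition of [0,T] with 0 = θ_0 < θ_1 < … < θ_K = T, and let f : [0,T] → E be a function. Then |[f]_θ|_{C^{α,(0,c]}([0,T],E)} ≤ (c^{1−α} / d_min(θ)) · sup_{j∈{1,…,K}} ‖f(θ_j) − f(θ_{j−1})‖_E. -/

import Mathlib

open ENNReal

/-- The Hölder seminorm (exponent `r`) of `f` on `[0,T]`, with the supremum
taken only over pairs of points whose distance lies in `A ⊆ (0,∞)`. -/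
noncomputable def holderSemiOnA {E : Type} [NormedAddCommGroup E]
    (T : ℝ) (A : Set ℝ) (r : ℝ) (f : ℝ → E) : ℝ≥0∞ :=
  ⨆ (s : ℝ) (t : ℝ) (_ : s ∈ Set.Icc (0:ℝ) T) (_ : t ∈ Set.Icc (0:ℝ) T)
    (_ : |s - t| ∈ A), (‖f s - f t‖₊ : ℝ≥0∞) / ENNReal.ofReal (|s - t| ^ r)

/-- Minimal mesh size of the partition with nodes `θ 0 < θ 1 < … < θ K`. -/
noncomputable def dMin (K : ℕ) (θ : ℕ → ℝ) : ℝ := ⨅ j : Fin K, (θ (j + 1) - θ j)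

/-- **Lemma 2.4**: small-scale Hölder estimate for the piecewise affine linear
interpolation `g = [f]_θ` of `f` at the nodes of the partition `θ`. -/
theorem lem_estcagrid
    {E : Type} [NormedAddCommGroup E] [NormedSpace ℝ E]
    (T c : ℝ) (hT : 0 < T) (hc : 0 < c) (α : ℝ) (hα : α ∈ Set.Icc (0:ℝ) 1)
    (K : ℕ) (hK : 1 ≤ K) (θ : ℕ → ℝ)
    (hθ0 : θ 0 = 0) (hθK : θ K = T)
    (hθmono : ∀ j, j < K → θ j < θ (j + 1))
    (f g : ℝ → E)
    (hg : ∀ j, j < K → ∀ s ∈ Set.Icc (θ j) (θ (j + 1)),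
        g s = ((θ (j + 1) - s) / (θ (j + 1) - θ j)) • f (θ j)
            + ((s - θ j) / (θ (j + 1) - θ j)) • f (θ (j + 1))) :
    holderSemiOnA T (Set.Ioc 0 c) α g
      ≤ ENNReal.ofReal (c ^ (1 - α) / dMin K θ) *
          ⨆ j : Fin K, (‖f (θ (j + 1)) - f (θ j)‖₊ : ℝ≥0∞) := by
  haveI : Nonempty (Fin K) := ⟨⟨0, hK⟩⟩
  -- dMin facts
  have hdminle : ∀ j : Fin K, dMin K θ ≤ θ (j + 1) - θ j := fun j =>
    ciInf_le (Set.Finite.bddBelow (Set.finite_range _)) j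
  have hdminpos : 0 < dMin K θ := by
    obtain ⟨j0, hj0⟩ := Finite.exists_min (fun j : Fin K => θ (j + 1) - θ j)
    have h0 : 0 < θ (↑j0 + 1) - θ ↑j0 := sub_pos.mpr (hθmono j0 j0.isLt)
    exact h0.trans_le (le_ciInf hj0)
  -- max increment
  obtain ⟨j1, hj1⟩ := Finite.exists_max (fun j : Fin K => ‖f (θ (j + 1)) - f (θ j)‖)
  set m : ℝ := ‖f (θ (↑j1 + 1)) - f (θ ↑j1)‖ with hm_def
  have hm0 : 0 ≤ m := norm_nonneg _
  have hm : ∀ j : Fin K, ‖f (θ (j + 1)) - f (θ j)‖ ≤ m := hj1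
  set L : ℝ := m / dMin K θ with hL_def
  have hL0 : 0 ≤ L := div_nonneg hm0 hdminpos.le
  -- monotonicity of θ
  have hmono : ∀ i j : ℕ, i ≤ j → j ≤ K → θ i ≤ θ j := by
    intro i j hij hjK
    induction j with
    | zero => simp [Nat.le_zero.mp hij]
    | succ n ih =>
      rcases Nat.lt_or_ge i (n + 1) with h | h
      · exact (ih (Nat.lt_succ_iff.mp h) (le_trans (Nat.le_succ n) hjK)).trans
          (hθmono n (by omega)).le
      · have : i = n + 1 := le_antisymm hij h
        simp [this]
  -- single-interval Lipschitz estimate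
  have hint : ∀ j, j < K → ∀ s t, θ j ≤ s → s ≤ t → t ≤ θ (j + 1) →
      ‖g t - g s‖ ≤ L * (t - s) := by
    intro j hj s t hs hst ht
    have hΔ : 0 < θ (j + 1) - θ j := sub_pos.mpr (hθmono j hj)
    have hgs := hg j hj s ⟨hs, hst.trans ht⟩
    have hgt := hg j hj t ⟨hs.trans hst, ht⟩
    have hdiff : g t - g s = ((t - s) / (θ (j + 1) - θ j)) • (f (θ (j + 1)) - f (θ j)) := by
      rw [hgs, hgt]
      match_scalars <;> field_simp <;> ring
    rw [hdiff, norm_smul, Real.norm_eq_abs,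
      abs_of_nonneg (div_nonneg (by linarith) hΔ.le), div_mul_eq_mul_div]
    have hmj : ‖f (θ (j + 1)) - f (θ j)‖ ≤ m := hm ⟨j, hj⟩
    have hd : dMin K θ ≤ θ (j + 1) - θ j := hdminle ⟨j, hj⟩
    calc (t - s) * ‖f (θ (j + 1)) - f (θ j)‖ / (θ (j + 1) - θ j)
        ≤ (t - s) * m / dMin K θ := by
          gcongr <;> first
            | linarith
            | exact mul_nonneg (by linarith) hm0
      _ = L * (t - s) := by rw [hL_def]; ring
  -- global Lipschitz estimate on [θ 0, θ K]
  have key : ∀ n, n ≤ K → ∀ s t, θ 0 ≤ s → s ≤ t → t ≤ θ n →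
      ‖g t - g s‖ ≤ L * (t - s) := by
    intro n
    induction n with
    | zero =>
      intro _ s t hs hst ht
      have : s = t := le_antisymm hst (ht.trans hs)
      subst this
      simp [hL0]
    | succ n ih =>
      intro hn s t hs hst ht
      have hnK : n < K := hn
      by_cases htn : t ≤ θ n
      · exact ih hnK.le s t hs hst htn
      · push_neg at htn
        by_cases hsn : θ n ≤ s
        · exact hint n hnK s t hsn hst ht
        · push_neg at hsn
          have h1 := ih hnK.le s (θ n) hs hsn.le le_rfl
          have h2 := hint n hnK (θ n) t le_rfl htn.le ht
          calc ‖g t - g s‖ ≤ ‖g t - g (θ n)‖ + ‖g (θ n) - g s‖ :=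
                norm_sub_le_norm_sub_add_norm_sub _ _ _
            _ ≤ L * (t - θ n) + L * (θ n - s) := add_le_add h2 h1
            _ = L * (t - s) := by ring
  have hlip : ∀ s t, s ∈ Set.Icc (0:ℝ) T → t ∈ Set.Icc (0:ℝ) T →
      ‖g s - g t‖ ≤ L * |s - t| := by
    intro s t hs ht
    rcases le_total t s with h | h
    · rw [abs_of_nonneg (by linarith)]
      exact key K le_rfl t s (by rw [hθ0]; exact ht.1) h (by rw [hθK]; exact hs.2)
    · rw [abs_of_nonpos (by linarith), ← norm_neg, neg_sub]
      have := key K le_rfl s t (by rw [hθ0]; exact hs.1) h (by rw [hθK]; exact ht.2)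
      linarith
  -- main estimate
  rw [holderSemiOnA]
  refine iSup_le fun s => iSup_le fun t => iSup_le fun hs => iSup_le fun ht =>
    iSup_le fun hst => ?_
  obtain ⟨hδ, hδc⟩ := hst
  set δ : ℝ := |s - t| with hδ_def
  refine le_trans ?_ (mul_le_mul_right
    (le_iSup (fun j : Fin K => (‖f (θ (↑j + 1)) - f (θ ↑j)‖₊ : ℝ≥0∞)) j1) _)
  refine ENNReal.div_le_of_le_mul ?_
  rw [← enorm_eq_nnnorm, ← enorm_eq_nnnorm, ← ofReal_norm, ← ofReal_norm, ← hm_def,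
    ← ENNReal.ofReal_mul (by positivity), ← ENNReal.ofReal_mul (by positivity)]
  refine ENNReal.ofReal_le_ofReal ?_
  have h1 : ‖g s - g t‖ ≤ L * δ := hlip s t hs ht
  have hsplit : δ ^ α * δ ^ (1 - α) = δ := by
    rw [← Real.rpow_add hδ]; simp
  have hpow : δ ^ (1 - α) ≤ c ^ (1 - α) :=
    Real.rpow_le_rpow hδ.le hδc (by linarith [hα.2])
  have hδα : 0 ≤ δ ^ α := Real.rpow_nonneg hδ.le α
  calc ‖g s - g t‖ ≤ L * δ := h1
    _ = L * (δ ^ α * δ ^ (1 - α)) := by rw [hsplit]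
    _ ≤ L * (δ ^ α * c ^ (1 - α)) := by gcongr
    _ = c ^ (1 - α) / dMin K θ * m * δ ^ α := by rw [hL_def]; ring
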